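/- Let Σ be an alphabet, let ℓ ≥ 1, and let bin : Σ → List Bool be a function such that every value bin σ has length ℓ. For a word w over Σ define san(w) := (the concatenation, over the letters σ of w in order, of bin σ ++ [false]) ++ (the list consisting of ℓ+1 copies of true). Then for all positions p and q with 0 ≤ p < q and with the suffix of san(w) starting at position q having length at least ℓ+1, the suffix of san(w) starting at position q is not a prefix of the suffix of san(w) starting at position p. -/

import Mathlib

/-- The sanitized encoding: each letter `σ` is replaced by `bin σ ++ [false]`,
and `ℓ+1` copies of `true` are appended at the end. -/
def san {α : Type*} (bin : α → List Bool) (ℓ : ℕ) (w : List α) : List Bool :=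
  (w.map fun σ => bin σ ++ [false]).flatten ++ List.replicate (ℓ + 1) true

lemma san_cons {α : Type*} (bin : α → List Bool) (ℓ : ℕ) (a : α) (w : List α) :
    san bin ℓ (a :: w) = (bin a ++ [false]) ++ san bin ℓ w := by
  simp [san]

lemma san_length {α : Type*} (ℓ : ℕ) (bin : α → List Bool)
    (hbin : ∀ σ : α, (bin σ).length = ℓ) (w : List α) :
    (san bin ℓ w).length = (ℓ + 1) * w.length + (ℓ + 1) := by
  induction w with
  | nil => simp [san]
  | cons a w ih => rw [san_cons]; simp [hbin, ih]; ring

lemma san_false {α : Type*} (ℓ : ℕ) (bin : α → List Bool)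
    (hbin : ∀ σ : α, (bin σ).length = ℓ) (w : List α) (k : ℕ) (hk : k < w.length) :
    (san bin ℓ w)[k * (ℓ + 1) + ℓ]? = some false := by
  induction w generalizing k with
  | nil => simp at hk
  | cons a w ih =>
    rw [san_cons]
    cases k with
    | zero =>
      rw [List.getElem?_append_left (by simp [hbin])]
      rw [List.getElem?_append_right (by simp [hbin])]
      simp [hbin]
    | succ k =>
      rw [List.getElem?_append_right (by simp [hbin])]
      have : (k + 1) * (ℓ + 1) + ℓ - (bin a ++ [false]).length = k * (ℓ + 1) + ℓ := by
        simp [hbin]; ring_nf; omega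
      rw [this]
      exact ih k (by simpa using hk)

lemma san_true {α : Type*} (ℓ : ℕ) (bin : α → List Bool)
    (hbin : ∀ σ : α, (bin σ).length = ℓ) (w : List α) (i : ℕ)
    (h1 : (ℓ + 1) * w.length ≤ i) (h2 : i < (ℓ + 1) * w.length + (ℓ + 1)) :
    (san bin ℓ w)[i]? = some true := by
  have hlen : ((w.map fun σ => bin σ ++ [false]).flatten).length = (ℓ + 1) * w.length := by
    have := san_length ℓ bin hbin w
    simp only [san, List.length_append, List.length_replicate] at this
    omega
  rw [san, List.getElem?_append_right (by omega)]
  rw [List.getElem?_replicate]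
  simp only [hlen]
  rw [if_pos (by omega)]

theorem stmt14 {α : Type*} (ℓ : ℕ) (hℓ : 1 ≤ ℓ) (bin : α → List Bool)
    (hbin : ∀ σ : α, (bin σ).length = ℓ) (w : List α) :
    ∀ p q : ℕ, p < q → ℓ + 1 ≤ ((san bin ℓ w).drop q).length →
      ¬ ((san bin ℓ w).drop q <+: (san bin ℓ w).drop p) := by
  intro p q hpq hlen hpre
  set s := san bin ℓ w with hs
  have hn : s.length = (ℓ + 1) * w.length + (ℓ + 1) := san_length ℓ bin hbin w
  rw [List.length_drop, hn] at hlen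
  -- q ≤ (ℓ+1)*w.length
  have hq : q ≤ (ℓ + 1) * w.length := by omega
  -- d := q - p ≥ 1
  obtain ⟨d, hd⟩ : ∃ d, q = p + d := ⟨q - p, by omega⟩
  have hd1 : 1 ≤ d := by omega
  -- a with a + d = (ℓ+1)*w.length
  obtain ⟨a, ha⟩ : ∃ a, a + d = (ℓ + 1) * w.length := ⟨(ℓ + 1) * w.length - d, by omega⟩
  -- the false position f in [a, a+ℓ]
  set k := a / (ℓ + 1) with hkdef
  set f := k * (ℓ + 1) + ℓ with hfdef
  have hka : k * (ℓ + 1) ≤ a := Nat.div_mul_le_self a (ℓ + 1) |>.trans_eq rfl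
  have haf : a ≤ f := by
    have h1 : (ℓ + 1) * k + a % (ℓ + 1) = a := Nat.div_add_mod a (ℓ + 1)
    have h2 : a % (ℓ + 1) < ℓ + 1 := Nat.mod_lt _ (by omega)
    have h3 : (ℓ + 1) * k = k * (ℓ + 1) := by ring
    omega
  have hfa : f ≤ a + ℓ := by omega
  have hkw : k < w.length := by
    by_contra hcon
    push_neg at hcon
    have : (ℓ + 1) * w.length ≤ k * (ℓ + 1) := by
      calc (ℓ + 1) * w.length ≤ (ℓ + 1) * k := by exact Nat.mul_le_mul_left _ hcon
        _ = k * (ℓ + 1) := by ring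
    omega
  -- p ≤ a
  have hpa : p ≤ a := by omega
  obtain ⟨e, he⟩ : ∃ e, p + e = a := ⟨a - p, by omega⟩
  obtain ⟨j, hj⟩ : ∃ j, a + j = f := ⟨f - a, by omega⟩
  have hpi : p + (e + j) = f := by omega
  have hqi : q + (e + j) = f + d := by omega
  -- from the prefix
  obtain ⟨t, ht⟩ := hpre
  have hilt : e + j < (s.drop q).length := by
    rw [List.length_drop, hn]; omega
  have key : s[p + (e + j)]? = s[q + (e + j)]? := by
    conv_lhs => rw [← List.getElem?_drop, ← ht,
      List.getElem?_append_left hilt, List.getElem?_drop]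
  rw [hpi, hqi] at key
  have hfalse : s[f]? = some false := san_false ℓ bin hbin w k hkw
  have htrue : s[f + d]? = some true := by
    apply san_true ℓ bin hbin w
    · omega
    · omega
  rw [hfalse, htrue] at key
  simp at key
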